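/- Suppose m = n and the initial values are sorted: x_1(0) ≤ x_2(0) ≤ … ≤ x_n(0). Let k ∈ {1,…,n} and set Δ = x̄(0) − x_k(0). Assume 0 ≤ Δ ≤ η and, for every index s ≠ k, |x_s(0) − x̄(0)| > η + Δ/(n−1). Then: (i) the order of node states is preserved for all times, i.e., x_i(t) ≤ x_j(t) for all t ≥ 0 and all i ≤ j; (ii) x_j(t) = x_j(0) for all j ≠ k and all t ≥ 0; and (iii) lim_{t→∞} x_k(t) = lim_{t→∞} x̄(t) = x̄(0) + Δ/(n−1). -/

import Mathlib

open Filter MeasureTheory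

/-- Average of a vector of `n` opinions. -/
noncomputable def cliqueAvg (n : ℕ) (x : Fin n → ℝ) : ℝ := (∑ j, x j) / (n : ℝ)

/-- Full-clique (`m = n`) bounded-confidence opinion dynamics with mixing parameter `δ`
and confidence level `η`, started from `x0`. -/
noncomputable def fcTraj (n : ℕ) (δ η : ℝ) (x0 : Fin n → ℝ) : ℕ → Fin n → ℝ
  | 0 => x0
  | t + 1 => fun i =>
      if |fcTraj n δ η x0 t i - cliqueAvg n (fcTraj n δ η x0 t)| ≤ η then
        (1 - δ) * fcTraj n δ η x0 t i + δ * cliqueAvg n (fcTraj n δ η x0 t)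
      else fcTraj n δ η x0 t i
theorem fc_key (n : ℕ) (hn : 2 ≤ n) (δ η : ℝ) (hδ0 : 0 < δ) (hδ1 : δ < 1) (hη0 : 0 < η)
    (x0 : Fin n → ℝ) (k : Fin n)
    (hΔ0 : 0 ≤ cliqueAvg n x0 - x0 k) (hΔη : cliqueAvg n x0 - x0 k ≤ η)
    (hsep : ∀ s : Fin n, s ≠ k →
      η + (cliqueAvg n x0 - x0 k) / ((n : ℝ) - 1) < |x0 s - cliqueAvg n x0|) :
    ∀ t : ℕ,
      (∀ j : Fin n, j ≠ k → fcTraj n δ η x0 t j = x0 j) ∧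
      fcTraj n δ η x0 t k = x0 k + ((cliqueAvg n x0 - x0 k)
          - (cliqueAvg n x0 - x0 k) * (1 - δ * ((n:ℝ)-1)/n)^t) * n / ((n:ℝ)-1) ∧
      cliqueAvg n (fcTraj n δ η x0 t) = cliqueAvg n x0 + ((cliqueAvg n x0 - x0 k)
          - (cliqueAvg n x0 - x0 k) * (1 - δ * ((n:ℝ)-1)/n)^t) / ((n:ℝ)-1) := by
  have hn2 : (2:ℝ) ≤ (n:ℝ) := by exact_mod_cast hn
  have hnpos : (0:ℝ) < (n:ℝ) := by linarith
  have hn1 : (0:ℝ) < (n:ℝ) - 1 := by linarith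
  set A := cliqueAvg n x0 with hA
  set D := A - x0 k with hD
  set L := 1 - δ * ((n:ℝ)-1)/n with hL
  have hL0 : 0 < L := by
    have : δ * ((n:ℝ)-1)/n < 1 := by
      rw [div_lt_one hnpos]
      nlinarith
    simp only [hL]; linarith
  have hL1 : L < 1 := by
    have : 0 < δ * ((n:ℝ)-1)/n := by positivity
    simp only [hL]; linarith
  have hSum : ∑ j, x0 j = A * n := by
    rw [hA]; unfold cliqueAvg; field_simp
  have hsum : ∀ f : Fin n → ℝ, (∀ j : Fin n, j ≠ k → f j = x0 j) →
      ∑ j, f j = A * n - x0 k + f k := by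
    intro f hf
    have h1 : ∑ j ∈ Finset.univ.erase k, f j = ∑ j ∈ Finset.univ.erase k, x0 j :=
      Finset.sum_congr rfl (fun j hj => hf j (Finset.ne_of_mem_erase hj))
    have h2 := Finset.sum_erase_add Finset.univ f (Finset.mem_univ k)
    have h3 := Finset.sum_erase_add Finset.univ x0 (Finset.mem_univ k)
    rw [hSum] at h3
    linarith
  intro t
  induction t with
  | zero =>
    refine ⟨fun j _ => rfl, ?_, ?_⟩
    · show x0 k = _; field_simp; ring
    · show A = _; field_simp; ring
  | succ t ih =>
    obtain ⟨h1, h2, h3⟩ := ih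
    have hpow0 : (0:ℝ) ≤ L^t := le_of_lt (pow_pos hL0 t)
    have hpow1 : L^t ≤ 1 := pow_le_one₀ (le_of_lt hL0) (le_of_lt hL1)
    have hDL0 : 0 ≤ D * L^t := mul_nonneg hΔ0 hpow0
    have hDLD : D * L^t ≤ D := by nlinarith
    -- distance from k to current average
    have hd : cliqueAvg n (fcTraj n δ η x0 t) - fcTraj n δ η x0 t k = D * L^t := by
      rw [h2, h3]; field_simp; ring
    have hstep : fcTraj n δ η x0 (t+1) = fun i =>
        if |fcTraj n δ η x0 t i - cliqueAvg n (fcTraj n δ η x0 t)| ≤ η then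
          (1 - δ) * fcTraj n δ η x0 t i + δ * cliqueAvg n (fcTraj n δ η x0 t)
        else fcTraj n δ η x0 t i := rfl
    have hfix : ∀ j : Fin n, j ≠ k → fcTraj n δ η x0 (t+1) j = x0 j := by
      intro j hj
      rw [hstep]
      simp only
      rw [h1 j hj, if_neg]
      · push_neg
        have hs := hsep j hj
        have habs : |x0 j - A| ≤ |x0 j - cliqueAvg n (fcTraj n δ η x0 t)|
            + |cliqueAvg n (fcTraj n δ η x0 t) - A| := by
          have := abs_sub_le (x0 j) (cliqueAvg n (fcTraj n δ η x0 t)) A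
          linarith [this]
        have havg : |cliqueAvg n (fcTraj n δ η x0 t) - A| ≤ D / ((n:ℝ)-1) := by
          rw [h3]
          have h0 : (0:ℝ) ≤ (D - D * L^t) / ((n:ℝ)-1) := by
            apply div_nonneg _ (le_of_lt hn1); nlinarith
          rw [add_sub_cancel_left, abs_of_nonneg h0]
          apply (div_le_div_iff_of_pos_right hn1).mpr
          nlinarith
        linarith
    refine ⟨hfix, ?_, ?_⟩
    · rw [hstep]
      simp only
      rw [if_pos, h2, h3]
      · rw [pow_succ]
        generalize L ^ t = P
        rw [hL]
        field_simp
        ring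
      · have : fcTraj n δ η x0 t k - cliqueAvg n (fcTraj n δ η x0 t) = -(D * L^t) := by
          linarith
        rw [this, abs_neg, abs_of_nonneg hDL0]
        linarith
    · have hf := hsum (fcTraj n δ η x0 (t+1)) hfix
      unfold cliqueAvg
      rw [hf]
      rw [hstep]
      simp only
      rw [if_pos, h2, h3]
      · rw [pow_succ]
        generalize L ^ t = P
        rw [hL]
        field_simp
        ring
      · have : fcTraj n δ η x0 t k - cliqueAvg n (fcTraj n δ η x0 t) = -(D * L^t) := by
          linarith
        rw [this, abs_neg, abs_of_nonneg hDL0]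
        linarith

/-- for `m = n` with sorted initial values, if `Δ = x̄(0) − x_k(0)` satisfies
`0 ≤ Δ ≤ η` and every other initial opinion is farther than `η + Δ/(n−1)` from the average,
then the order of node states is preserved for all time, all nodes other than `k` keep their
initial values, and `x_k(t)` and `x̄(t)` both converge to `x̄(0) + Δ/(n−1)`. -/
theorem stmt3 (n : ℕ) (hn : 2 ≤ n) (δ η : ℝ) (hδ0 : 0 < δ) (hδ1 : δ < 1) (hη0 : 0 < η)
    (x0 : Fin n → ℝ) (hsorted : Monotone x0) (k : Fin n)
    (hΔ0 : 0 ≤ cliqueAvg n x0 - x0 k) (hΔη : cliqueAvg n x0 - x0 k ≤ η)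
    (hsep : ∀ s : Fin n, s ≠ k →
      η + (cliqueAvg n x0 - x0 k) / ((n : ℝ) - 1) < |x0 s - cliqueAvg n x0|) :
    (∀ t : ℕ, ∀ i j : Fin n, i ≤ j → fcTraj n δ η x0 t i ≤ fcTraj n δ η x0 t j) ∧
    (∀ j : Fin n, j ≠ k → ∀ t : ℕ, fcTraj n δ η x0 t j = x0 j) ∧
    Tendsto (fun t => fcTraj n δ η x0 t k) atTop
      (nhds (cliqueAvg n x0 + (cliqueAvg n x0 - x0 k) / ((n : ℝ) - 1))) ∧
    Tendsto (fun t => cliqueAvg n (fcTraj n δ η x0 t)) atTop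
      (nhds (cliqueAvg n x0 + (cliqueAvg n x0 - x0 k) / ((n : ℝ) - 1))) := by
  have key := fc_key n hn δ η hδ0 hδ1 hη0 x0 k hΔ0 hΔη hsep
  have hn2 : (2:ℝ) ≤ (n:ℝ) := by exact_mod_cast hn
  have hnpos : (0:ℝ) < (n:ℝ) := by linarith
  have hn1 : (0:ℝ) < (n:ℝ) - 1 := by linarith
  set A := cliqueAvg n x0 with hA
  set D := A - x0 k with hD
  set L := 1 - δ * ((n:ℝ)-1)/n with hL
  have hL0 : 0 < L := by
    have : δ * ((n:ℝ)-1)/n < 1 := by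
      rw [div_lt_one hnpos]; nlinarith
    simp only [hL]; linarith
  have hL1 : L < 1 := by
    have : 0 < δ * ((n:ℝ)-1)/n := by positivity
    simp only [hL]; linarith
  have hd0 : 0 ≤ D / ((n:ℝ)-1) := div_nonneg hΔ0 hn1.le
  have hupper : ∀ j : Fin n, j ≠ k → k ≤ j → A + D / ((n:ℝ)-1) < x0 j := by
    intro j hj hkj
    have hs := hsep j hj
    rcases abs_cases (x0 j - A) with ⟨he, _⟩ | ⟨he, _⟩
    · rw [he] at hs; linarith
    · exfalso
      rw [he] at hs
      have hx : x0 k ≤ x0 j := hsorted hkj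
      have hDe : D = A - x0 k := hD
      linarith
  refine ⟨?_, fun j hj t => (key t).1 j hj, ?_, ?_⟩
  · intro t i j hij
    obtain ⟨h1, h2, h3⟩ := key t
    have hp0 : (0:ℝ) ≤ L^t := pow_nonneg hL0.le t
    have hp1 : L^t ≤ 1 := pow_le_one₀ hL0.le hL1.le
    have hnonneg : 0 ≤ (D - D * L^t) * n / ((n:ℝ)-1) := by
      apply div_nonneg (mul_nonneg (by nlinarith) hnpos.le) hn1.le
    have hub : fcTraj n δ η x0 t k ≤ A + D / ((n:ℝ)-1) := by
      rw [h2]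
      have hid : x0 k + (D - D*L^t)*(n:ℝ)/((n:ℝ)-1)
          = A + D/((n:ℝ)-1) - D*L^t*(n:ℝ)/((n:ℝ)-1) := by
        rw [hD]; field_simp; ring
      have hge : 0 ≤ D*L^t*(n:ℝ)/((n:ℝ)-1) := by positivity
      linarith
    by_cases hik : i = k
    · by_cases hjk : j = k
      · rw [hik, hjk]
      · rw [hik, h1 j hjk]
        have := hupper j hjk (hik ▸ hij)
        linarith
    · by_cases hjk : j = k
      · rw [h1 i hik, hjk, h2]
        have : x0 i ≤ x0 k := hsorted (hjk ▸ hij)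
        linarith
      · rw [h1 i hik, h1 j hjk]
        exact hsorted hij
  · have hLt : Tendsto (fun t => L ^ t) atTop (nhds 0) :=
      tendsto_pow_atTop_nhds_zero_of_lt_one hL0.le hL1
    have final := ((((hLt.const_mul D).const_sub D).mul_const ((n:ℝ))).div_const
        ((n:ℝ)-1)).const_add (x0 k)
    have heq : (fun t => fcTraj n δ η x0 t k)
        = fun t => x0 k + (D - D*L^t)*(n:ℝ)/((n:ℝ)-1) := funext fun t => (key t).2.1
    rw [heq]
    have hval : x0 k + (D - D*0)*(n:ℝ)/((n:ℝ)-1) = A + D/((n:ℝ)-1) := by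
      rw [hD]; field_simp; ring
    exact hval ▸ final
  · have hLt : Tendsto (fun t => L ^ t) atTop (nhds 0) :=
      tendsto_pow_atTop_nhds_zero_of_lt_one hL0.le hL1
    have final := (((hLt.const_mul D).const_sub D).div_const ((n:ℝ)-1)).const_add A
    have heq : (fun t => cliqueAvg n (fcTraj n δ η x0 t))
        = fun t => A + (D - D*L^t)/((n:ℝ)-1) := funext fun t => (key t).2.2
    rw [heq]
    have hval : A + (D - D*0)/((n:ℝ)-1) = A + D/((n:ℝ)-1) := by ring
    exact hval ▸ final
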